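/- Let R ⊆ S_n be a top-k partial ranking, σ ∈ R, and τ ∈ S_n. Then the Kendall distance decomposes as d(σ, τ) = d(σ, Π_R(τ)) + d(Π_R(τ), τ), where Π_R(τ) is the unique Kendall-closest element of R to τ. -/

import Mathlib

/-- The Kendall (tau) distance between two permutations of `Fin n`:
the number of pairs `(x, y)` with `x < y` on which `σ⁻¹` and `τ⁻¹`
disagree in relative order. -/
def kendallDist {n : ℕ} (σ τ : Equiv.Perm (Fin n)) : ℕ :=
  (Finset.univ.filter (fun p : Fin n × Fin n =>
    p.1 < p.2 ∧ ¬((σ⁻¹ p.1 < σ⁻¹ p.2) ↔ (τ⁻¹ p.1 < τ⁻¹ p.2)))).card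

/-- The top-`k` partial ranking determined by the items `a 0, …, a (k-1)`:
the set of full rankings (permutations) `σ` with `σ i = a i` for the first
`k` positions. -/
def topkFinset {n k : ℕ} (hk : k ≤ n) (a : Fin k → Fin n) :
    Finset (Equiv.Perm (Fin n)) :=
  Finset.univ.filter fun σ => ∀ i : Fin k, σ (Fin.castLE hk i) = a i

/-- The permutation of `Fin n` fixing the first `k` positions and reversing
the order of the remaining `n - k` positions. -/
def revAfter (n k : ℕ) : Equiv.Perm (Fin n) :=
  Function.Involutive.toPerm
    (fun p => if _h : (p : ℕ) < k then p
      else ⟨n + k - 1 - (p : ℕ), by have := p.isLt; omega⟩)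
    (by
      intro p
      have hp := p.isLt
      by_cases h : (p : ℕ) < k
      · simp [h]
      · have h2 : ¬ (n + k - 1 - (p : ℕ) < k) := by omega
        simp only [dif_neg h, dif_neg h2]
        ext
        simp
        omega)

/-- The antithetic permutation of `σ` relative to a top-`k` partial ranking:
the first `k` positions are unchanged and the remaining positions are
reversed, i.e. `A σ (k+j) = σ (n+1-j)` (in 1-indexed notation). -/
def antithetic (n k : ℕ) (σ : Equiv.Perm (Fin n)) : Equiv.Perm (Fin n) :=
  σ * revAfter n k

namespace KendallAux

variable {n k : ℕ}

lemma mem_topk {hk : k ≤ n} {a : Fin k → Fin n} {σ : Equiv.Perm (Fin n)} :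
    σ ∈ topkFinset hk a ↔ ∀ i : Fin k, σ (Fin.castLE hk i) = a i := by
  simp [topkFinset]

lemma inv_apply {hk : k ≤ n} {a : Fin k → Fin n} {σ : Equiv.Perm (Fin n)}
    (hσ : σ ∈ topkFinset hk a) (i : Fin k) : σ⁻¹ (a i) = Fin.castLE hk i := by
  have h := (mem_topk.mp hσ) i
  apply Equiv.injective σ
  rw [Equiv.Perm.inv_def, Equiv.apply_symm_apply, h]

lemma inv_ge {hk : k ≤ n} {a : Fin k → Fin n} {σ : Equiv.Perm (Fin n)}
    (hσ : σ ∈ topkFinset hk a) {x : Fin n} (hx : ∀ i, a i ≠ x) :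
    k ≤ (σ⁻¹ x : ℕ) := by
  by_contra h
  push_neg at h
  have h2 := (mem_topk.mp hσ) ⟨(σ⁻¹ x : ℕ), h⟩
  have hc : Fin.castLE hk ⟨(σ⁻¹ x : ℕ), h⟩ = σ⁻¹ x := rfl
  rw [hc, show σ (σ⁻¹ x) = x from Equiv.apply_symm_apply σ x] at h2
  exact hx _ h2.symm

lemma swap_lt_iff {p p' u v : Fin n} (h : (p' : ℕ) = (p : ℕ) + 1)
    (h1 : ¬(u = p ∧ v = p')) (h2 : ¬(u = p' ∧ v = p)) :
    Equiv.swap p p' u < Equiv.swap p p' v ↔ u < v := by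
  simp only [Equiv.swap_apply_def]
  split_ifs <;> (simp only [Fin.lt_def, Fin.ext_iff] at * <;> omega)

lemma adj_swap {hk : k ≤ n} {a : Fin k → Fin n} {π τ : Equiv.Perm (Fin n)}
    (hπ : π ∈ topkFinset hk a)
    (hmin : ∀ ρ ∈ topkFinset hk a, kendallDist π τ ≤ kendallDist ρ τ)
    {x y : Fin n} (hx : ∀ i, a i ≠ x)
    (hadj : (π⁻¹ y : ℕ) = (π⁻¹ x : ℕ) + 1)
    (hτ : (τ⁻¹ y : ℕ) < (τ⁻¹ x : ℕ)) : False := by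
  set p := π⁻¹ x with hp
  set p' := π⁻¹ y with hp'
  have hpp' : p ≠ p' := by
    intro h; rw [Fin.ext_iff] at h; omega
  have hxy : x ≠ y := by
    intro h; rw [hp, hp', h] at hpp'; exact hpp' rfl
  have hkp : k ≤ (p : ℕ) := inv_ge hπ hx
  set ρ := π * Equiv.swap p p' with hρ
  have hρinv : ∀ u, ρ⁻¹ u = Equiv.swap p p' (π⁻¹ u) := by
    intro u; rw [hρ, mul_inv_rev, Equiv.swap_inv]; rfl
  have hρmem : ρ ∈ topkFinset hk a := by
    rw [mem_topk]
    intro i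
    have h1 : Fin.castLE hk i ≠ p := by
      intro h; rw [Fin.ext_iff] at h
      have := i.isLt; simp at h; omega
    have h2 : Fin.castLE hk i ≠ p' := by
      intro h; rw [Fin.ext_iff] at h
      have := i.isLt; simp at h; omega
    rw [hρ]
    simp only [Equiv.Perm.mul_apply, Equiv.swap_apply_of_ne_of_ne h1 h2]
    exact (mem_topk.mp hπ) i
  have hρx : ρ⁻¹ x = p' := by rw [hρinv, ← hp, Equiv.swap_apply_left]
  have hρy : ρ⁻¹ y = p := by rw [hρinv, ← hp', Equiv.swap_apply_right]
  have hπ1x : ∀ u, π⁻¹ u = p → u = x := by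
    intro u h; rw [hp] at h; exact Equiv.injective π⁻¹ h
  have hπ1y : ∀ u, π⁻¹ u = p' → u = y := by
    intro u h; rw [hp'] at h; exact Equiv.injective π⁻¹ h
  have hlt' : kendallDist ρ τ < kendallDist π τ := by
    unfold kendallDist
    apply Finset.card_lt_card
    have hsub : (Finset.univ.filter (fun pr : Fin n × Fin n =>
        pr.1 < pr.2 ∧ ¬((ρ⁻¹ pr.1 < ρ⁻¹ pr.2) ↔ (τ⁻¹ pr.1 < τ⁻¹ pr.2)))) ⊆
        (Finset.univ.filter (fun pr : Fin n × Fin n =>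
        pr.1 < pr.2 ∧ ¬((π⁻¹ pr.1 < π⁻¹ pr.2) ↔ (τ⁻¹ pr.1 < τ⁻¹ pr.2)))) := by
      intro pr hpr
      simp only [Finset.mem_filter, Finset.mem_univ, true_and] at hpr ⊢
      obtain ⟨hlt, hdis⟩ := hpr
      refine ⟨hlt, ?_⟩
      by_cases hc1 : pr.1 = x ∧ pr.2 = y
      · exfalso
        apply hdis
        rw [hc1.1, hc1.2, hρx, hρy]
        simp only [Fin.lt_def]
        omega
      by_cases hc2 : pr.1 = y ∧ pr.2 = x
      · exfalso
        apply hdis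
        rw [hc2.1, hc2.2, hρx, hρy]
        simp only [Fin.lt_def]
        omega
      have key : ρ⁻¹ pr.1 < ρ⁻¹ pr.2 ↔ π⁻¹ pr.1 < π⁻¹ pr.2 := by
        rw [hρinv, hρinv]
        apply swap_lt_iff hadj
        · intro h; exact hc1 ⟨hπ1x _ h.1, hπ1y _ h.2⟩
        · intro h; exact hc2 ⟨hπ1y _ h.1, hπ1x _ h.2⟩
      rw [key] at hdis
      exact hdis
    rw [Finset.ssubset_iff_of_subset hsub]
    rcases lt_or_gt_of_ne hxy with hlt | hlt
    · refine ⟨(x, y), ?_, ?_⟩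
      · simp only [Finset.mem_filter, Finset.mem_univ, true_and]
        refine ⟨hlt, ?_⟩
        rw [← hp, ← hp']
        simp only [Fin.lt_def]
        omega
      · simp only [Finset.mem_filter, Finset.mem_univ, true_and, not_and, not_not]
        intro _
        rw [hρx, hρy]
        simp only [Fin.lt_def]
        omega
    · refine ⟨(y, x), ?_, ?_⟩
      · simp only [Finset.mem_filter, Finset.mem_univ, true_and]
        refine ⟨hlt, ?_⟩
        rw [← hp, ← hp']
        simp only [Fin.lt_def]
        omega
      · simp only [Finset.mem_filter, Finset.mem_univ, true_and, not_and, not_not]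
        intro _
        rw [hρx, hρy]
        simp only [Fin.lt_def]
        omega
  exact absurd (hmin ρ hρmem) (by omega)

lemma no_bad {hk : k ≤ n} {a : Fin k → Fin n} {π τ : Equiv.Perm (Fin n)}
    (hπ : π ∈ topkFinset hk a)
    (hmin : ∀ ρ ∈ topkFinset hk a, kendallDist π τ ≤ kendallDist ρ τ) :
    ∀ g : ℕ, ∀ x y : Fin n, (∀ i, a i ≠ x) → (∀ i, a i ≠ y) →
      ((π⁻¹ x : ℕ) < (π⁻¹ y : ℕ)) → ((π⁻¹ y : ℕ) - (π⁻¹ x : ℕ) ≤ g) →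
      ((τ⁻¹ y : ℕ) < (τ⁻¹ x : ℕ)) → False := by
  intro g
  induction g with
  | zero => intro x y _ _ h1 h2 _; omega
  | succ g ih =>
    intro x y hx hy hlt hgap hτ
    by_cases hadj : (π⁻¹ y : ℕ) = (π⁻¹ x : ℕ) + 1
    · exact adj_swap hπ hmin hx hadj hτ
    · have hn : (π⁻¹ x : ℕ) + 1 < n := by
        have := (π⁻¹ y).isLt; omega
      set pz : Fin n := ⟨(π⁻¹ x : ℕ) + 1, hn⟩ with hpz
      set z := π pz with hz
      have hzx : π⁻¹ z = pz := by rw [hz, Equiv.Perm.inv_def, Equiv.symm_apply_apply]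
      have hzout : ∀ i, a i ≠ z := by
        intro i hi
        have h2 : π⁻¹ z = Fin.castLE hk i := by rw [← hi]; exact inv_apply hπ i
        rw [hzx] at h2
        have h3 : (pz : ℕ) = (i : ℕ) := congrArg Fin.val h2
        have hkx := inv_ge hπ hx
        have := i.isLt
        simp [hpz] at h3
        rw [Equiv.Perm.inv_def] at hkx
        omega
      have hzval : (π⁻¹ z : ℕ) = (π⁻¹ x : ℕ) + 1 := by rw [hzx]
      by_cases hcase : (τ⁻¹ z : ℕ) < (τ⁻¹ x : ℕ)
      · exact ih x z hx hzout (by omega) (by omega) hcase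
      · have hzy : z ≠ y := by
          intro h; rw [h] at hzval; omega
        have hτzy : (τ⁻¹ y : ℕ) < (τ⁻¹ z : ℕ) := by
          push_neg at hcase
          rcases Nat.eq_or_lt_of_le hcase with h | h
          · exfalso
            apply hzy
            have : τ⁻¹ x = τ⁻¹ z := Fin.ext h
            have hxz := Equiv.injective τ⁻¹ this
            rw [← hxz] at hzval
            omega
          · omega
        exact ih z y hzout hy (by omega) (by omega) hτzy


lemma tail_agree {hk : k ≤ n} {a : Fin k → Fin n} {π τ : Equiv.Perm (Fin n)}
    (hπ : π ∈ topkFinset hk a)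
    (hmin : ∀ ρ ∈ topkFinset hk a, kendallDist π τ ≤ kendallDist ρ τ)
    {x y : Fin n} (hx : ∀ i, a i ≠ x) (hy : ∀ i, a i ≠ y) (hxy : x ≠ y) :
    (π⁻¹ x < π⁻¹ y) ↔ (τ⁻¹ x < τ⁻¹ y) := by
  have hπne : (π⁻¹ x : ℕ) ≠ (π⁻¹ y : ℕ) :=
    fun h => hxy (Equiv.injective π⁻¹ (Fin.ext h))
  have hτne : (τ⁻¹ x : ℕ) ≠ (τ⁻¹ y : ℕ) :=
    fun h => hxy (Equiv.injective τ⁻¹ (Fin.ext h))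
  have hb := no_bad hπ hmin n
  simp only [Fin.lt_def]
  constructor
  · intro h
    by_contra h2
    exact hb x y hx hy h (by have := (π⁻¹ y).isLt; omega) (by omega)
  · intro h
    by_contra h2
    exact hb y x hy hx (by omega) (by have := (π⁻¹ x).isLt; omega) h

end KendallAux

/-- Decomposition of distances: for a top-`k` partial ranking `R`, `σ ∈ R` and
any `τ ∈ S_n`, `d(σ, τ) = d(σ, Π_R(τ)) + d(Π_R(τ), τ)`, where `Π_R(τ)` is the
(unique) Kendall-closest element of `R` to `τ`, here characterized as any
minimizer `π`. -/
theorem kendallDist_decomp {n k : ℕ} (hk : k ≤ n) (a : Fin k → Fin n)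
    (ha : Function.Injective a) (σ τ π : Equiv.Perm (Fin n))
    (hσ : σ ∈ topkFinset hk a) (hπ : π ∈ topkFinset hk a)
    (hmin : ∀ ρ ∈ topkFinset hk a, kendallDist π τ ≤ kendallDist ρ τ) :
    kendallDist σ τ = kendallDist σ π + kendallDist π τ := by
  classical
  have key : ∀ u v : Fin n, u ≠ v →
      ((π⁻¹ u < π⁻¹ v) ↔ (σ⁻¹ u < σ⁻¹ v)) ∨
      ((π⁻¹ u < π⁻¹ v) ↔ (τ⁻¹ u < τ⁻¹ v)) := by
    intro u v huv
    by_cases hu : ∃ i, a i = u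
    · obtain ⟨i, hi⟩ := hu
      left
      by_cases hv : ∃ j, a j = v
      · obtain ⟨j, hj⟩ := hv
        rw [← hi, ← hj, KendallAux.inv_apply hπ, KendallAux.inv_apply hσ,
          KendallAux.inv_apply hπ, KendallAux.inv_apply hσ]
      · push_neg at hv
        have h1 : (π⁻¹ u : ℕ) < k := by
          rw [← hi, KendallAux.inv_apply hπ]; exact i.isLt
        have h2 : (σ⁻¹ u : ℕ) < k := by
          rw [← hi, KendallAux.inv_apply hσ]; exact i.isLt
        have h3 := KendallAux.inv_ge hπ hv
        have h4 := KendallAux.inv_ge hσ hv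
        simp only [Fin.lt_def]
        omega
    · push_neg at hu
      by_cases hv : ∃ j, a j = v
      · obtain ⟨j, hj⟩ := hv
        left
        have h1 : (π⁻¹ v : ℕ) < k := by
          rw [← hj, KendallAux.inv_apply hπ]; exact j.isLt
        have h2 : (σ⁻¹ v : ℕ) < k := by
          rw [← hj, KendallAux.inv_apply hσ]; exact j.isLt
        have h3 := KendallAux.inv_ge hπ hu
        have h4 := KendallAux.inv_ge hσ hu
        simp only [Fin.lt_def]
        omega
      · push_neg at hv
        right
        exact KendallAux.tail_agree hπ hmin hu hv huv
  unfold kendallDist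
  have hdisj : Disjoint
      (Finset.univ.filter (fun p : Fin n × Fin n =>
        p.1 < p.2 ∧ ¬((σ⁻¹ p.1 < σ⁻¹ p.2) ↔ (π⁻¹ p.1 < π⁻¹ p.2))))
      (Finset.univ.filter (fun p : Fin n × Fin n =>
        p.1 < p.2 ∧ ¬((π⁻¹ p.1 < π⁻¹ p.2) ↔ (τ⁻¹ p.1 < τ⁻¹ p.2)))) := by
    rw [Finset.disjoint_left]
    intro pr h1 h2
    simp only [Finset.mem_filter, Finset.mem_univ, true_and] at h1 h2
    rcases key pr.1 pr.2 (ne_of_lt h1.1) with h | h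
    · exact h1.2 h.symm
    · exact h2.2 h
  rw [← Finset.card_union_of_disjoint hdisj]
  congr 1
  ext pr
  simp only [Finset.mem_filter, Finset.mem_union, Finset.mem_univ, true_and]
  constructor
  · rintro ⟨hlt, hd⟩
    have h := key pr.1 pr.2 (ne_of_lt hlt)
    tauto
  · rintro (⟨hlt, hd⟩ | ⟨hlt, hd⟩) <;>
      (have h := key pr.1 pr.2 (ne_of_lt hlt); tauto)
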